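/- With T(M, n) := M - φ(M, n) (φ being the count of positive integers ≤ M with no prime factor ≤ n), for every natural number n ≥ 1: T(n² + 2n, n) - T(n², n) = T(2n, n) + ∑_{d squarefree, d > 1, prime factors ≤ n} (-μ(d))·⌊((n² mod d) + (2n mod d))/d⌋. -/

import Mathlib

open ArithmeticFunction Nat Finset
open scoped ArithmeticFunction.Moebius

/-- Index set: squarefree `d > 1` all of whose prime factors are `≤ n`. -/
def sqfSet (n : ℕ) : Finset ℕ :=
  (Finset.range (primorial n + 1)).filter
    (fun d => 1 < d ∧ Squarefree d ∧ ∀ p ∈ d.primeFactors, p ≤ n)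

/-- The transformed Legendre function `φ_T`. -/
def phiT (M₁ M₂ n : ℕ) : ℤ :=
  -∑ d ∈ sqfSet n, μ d * (((M₁ % d + M₂ % d) / d : ℕ) : ℤ)

/-- Legendre's function: positive integers `≤ M` with no prime factor `≤ n`. -/
def legPhi (M n : ℕ) : ℕ :=
  ((Finset.Icc 1 M).filter (fun m => ∀ p ∈ m.primeFactors, n < p)).card

lemma squarefree_prod_primes {s : Finset ℕ} (hs : ∀ p ∈ s, p.Prime) :
    Squarefree (∏ p ∈ s, p) := by
  induction s using Finset.induction with
  | empty => simpa using squarefree_one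
  | @insert a s ha ih =>
    rw [Finset.prod_insert ha]
    refine (Nat.squarefree_mul ?_).mpr ⟨(hs a (mem_insert_self a s)).prime.squarefree, ih fun p hp => hs p (mem_insert_of_mem hp)⟩
    exact Nat.Coprime.prod_right fun p hp =>
      (Nat.coprime_primes (hs a (mem_insert_self a s)) (hs p (mem_insert_of_mem hp))).mpr
        (fun h => ha (h ▸ hp))

lemma primorial_eq_prod (n : ℕ) :
    primorial n = ∏ p ∈ (Finset.range (n+1)).filter Nat.Prime, p := rfl

lemma squarefree_primorial' (n : ℕ) : Squarefree (primorial n) :=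
  squarefree_prod_primes fun _ hp => (mem_filter.mp hp).2

lemma primeFactors_primorial' (n : ℕ) :
    (primorial n).primeFactors = (Finset.range (n+1)).filter Nat.Prime :=
  Nat.primeFactors_prod fun _ hp => (mem_filter.mp hp).2

lemma sqfSet_eq (n : ℕ) : sqfSet n = (primorial n).divisors.erase 1 := by
  ext d
  simp only [sqfSet, mem_filter, mem_range, mem_erase, Nat.mem_divisors,
    (primorial_pos n).ne', ne_eq, not_false_eq_true, and_true]
  constructor
  · rintro ⟨-, hd1, hsq, hle⟩
    refine ⟨by omega, ?_⟩
    have : d = ∏ p ∈ d.primeFactors, p := (Nat.prod_primeFactors_of_squarefree hsq).symm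
    rw [this, primorial_eq_prod]
    refine Finset.prod_dvd_prod_of_subset _ _ _ fun p hp => ?_
    simp only [mem_filter, mem_range]
    exact ⟨by have := hle p hp; omega, Nat.prime_of_mem_primeFactors hp⟩
  · rintro ⟨hd1, hdvd⟩
    have hsq : Squarefree d := (squarefree_primorial' n).squarefree_of_dvd hdvd
    refine ⟨?_, ?_, hsq, ?_⟩
    · have := Nat.le_of_dvd (primorial_pos n) hdvd; omega
    · rcases Nat.eq_zero_or_pos d with h | h
      · exact absurd (zero_dvd_iff.mp (h ▸ hdvd)) (primorial_pos n).ne'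
      · omega
    · intro p hp
      have : p ∈ (primorial n).primeFactors :=
        Nat.mem_primeFactors.mpr ⟨Nat.prime_of_mem_primeFactors hp,
          (Nat.dvd_of_mem_primeFactors hp).trans hdvd, (primorial_pos n).ne'⟩
      rw [primeFactors_primorial'] at this
      have := (mem_filter.mp this).1
      simp only [mem_range] at this; omega

lemma sum_moebius_divisors (k : ℕ) :
    ∑ d ∈ k.divisors, μ d = if k = 1 then 1 else 0 := by
  rw [← coe_mul_zeta_apply, moebius_mul_coe_zeta, ArithmeticFunction.one_apply]

lemma legendre (M n : ℕ) :
    (legPhi M n : ℤ) = ∑ d ∈ (primorial n).divisors, μ d * ((M / d : ℕ) : ℤ) := by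
  have hP : primorial n ≠ 0 := (primorial_pos n).ne'
  have key : ∀ d : ℕ, ((M / d : ℕ) : ℤ) = ∑ m ∈ Finset.Ioc 0 M, if d ∣ m then (1 : ℤ) else 0 := by
    intro d
    rw [← Finset.sum_filter, Finset.sum_const, ← Nat.Ioc_filter_dvd_card_eq_div]
    simp
  calc (legPhi M n : ℤ)
      = ∑ m ∈ Finset.Ioc 0 M, if (∀ p ∈ m.primeFactors, n < p) then (1 : ℤ) else 0 := by
        rw [legPhi, ← Finset.Icc_add_one_left_eq_Ioc, ← Finset.sum_filter, Finset.sum_const]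
        simp
    _ = ∑ m ∈ Finset.Ioc 0 M, ∑ d ∈ (Nat.gcd (primorial n) m).divisors, (μ d : ℤ) := by
        refine Finset.sum_congr rfl fun m hm => ?_
        have hm0 : m ≠ 0 := by simp only [Finset.mem_Ioc] at hm; omega
        rw [sum_moebius_divisors]
        have heq : Nat.gcd (primorial n) m = 1 ↔ ∀ p ∈ m.primeFactors, n < p := by
          rw [← Nat.coprime_iff_gcd_eq_one, ← Nat.disjoint_primeFactors hP hm0,
            primeFactors_primorial', Finset.disjoint_right]
          constructor
          · intro h p hp
            by_contra hc
            push_neg at hc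
            exact h hp (mem_filter.mpr ⟨mem_range.mpr (by omega),
              Nat.prime_of_mem_primeFactors hp⟩)
          · intro h p hp hmem
            have h1 := h p hp
            have h2 := mem_range.mp (mem_filter.mp hmem).1
            omega
        congr 1
        rw [eq_iff_iff, heq]
    _ = ∑ m ∈ Finset.Ioc 0 M, ∑ d ∈ (primorial n).divisors.filter (· ∣ m), (μ d : ℤ) := by
        refine Finset.sum_congr rfl fun m hm => ?_
        have hm0 : m ≠ 0 := by simp only [Finset.mem_Ioc] at hm; omega
        congr 1
        ext d
        simp [Nat.mem_divisors, Nat.dvd_gcd_iff, hP, Nat.gcd_eq_zero_iff, hm0, and_assoc]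
    _ = ∑ m ∈ Finset.Ioc 0 M, ∑ d ∈ (primorial n).divisors, if d ∣ m then (μ d : ℤ) else 0 := by
        refine Finset.sum_congr rfl fun m _ => ?_
        rw [Finset.sum_filter]
    _ = ∑ d ∈ (primorial n).divisors, μ d * ((M / d : ℕ) : ℤ) := by
        rw [Finset.sum_comm]
        refine Finset.sum_congr rfl fun d _ => ?_
        rw [key d, Finset.mul_sum]
        refine Finset.sum_congr rfl fun m _ => ?_
        split <;> simp

lemma carry_div (a b d : ℕ) (hd : 0 < d) :
    (a + b) / d = a / d + b / d + (a % d + b % d) / d := by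
  have ha := Nat.div_add_mod a d
  have hb := Nat.div_add_mod b d
  have h : a + b = d * (a / d + b / d) + (a % d + b % d) := by rw [Nat.mul_add]; omega
  rw [h, Nat.mul_add_div hd]

lemma T_eq (M n : ℕ) :
    ((M - legPhi M n : ℕ) : ℤ) = -∑ d ∈ sqfSet n, μ d * ((M / d : ℕ) : ℤ) := by
  have hle : legPhi M n ≤ M :=
    le_trans (Finset.card_filter_le _ _) (by simp [Nat.card_Icc])
  have h1 : (1 : ℕ) ∈ (primorial n).divisors :=
    Nat.one_mem_divisors.mpr (primorial_pos n).ne'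
  have hsplit := Finset.add_sum_erase _ (fun d => (μ d : ℤ) * ((M / d : ℕ) : ℤ)) h1
  rw [Nat.cast_sub hle, legendre, sqfSet_eq, ← hsplit]
  simp only [ArithmeticFunction.moebius_apply_one, Nat.div_one]
  push_cast
  ring

theorem stmt_9 (n : ℕ) (hn : 1 ≤ n) :
    (((n ^ 2 + 2 * n) - legPhi (n ^ 2 + 2 * n) n : ℕ) : ℤ) -
        ((n ^ 2 - legPhi (n ^ 2) n : ℕ) : ℤ) =
      ((2 * n - legPhi (2 * n) n : ℕ) : ℤ) +
        ∑ d ∈ sqfSet n, (-μ d) * (((n ^ 2 % d + 2 * n % d) / d : ℕ) : ℤ) := by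
  rw [T_eq, T_eq, T_eq]
  have hsum : ∑ d ∈ sqfSet n, (μ d : ℤ) * (((n ^ 2 + 2 * n) / d : ℕ) : ℤ)
      = ∑ d ∈ sqfSet n, ((μ d : ℤ) * ((n ^ 2 / d : ℕ) : ℤ)
          + ((μ d : ℤ) * ((2 * n / d : ℕ) : ℤ)
          - (-μ d : ℤ) * (((n ^ 2 % d + 2 * n % d) / d : ℕ) : ℤ))) := by
    refine Finset.sum_congr rfl fun d hd => ?_
    have hd1 : 1 < d := (Finset.mem_filter.mp hd).2.1
    rw [carry_div (n ^ 2) (2 * n) d (by omega)]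
    push_cast
    ring
  rw [hsum, Finset.sum_add_distrib, Finset.sum_sub_distrib]
  ring
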